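/- For every n ≥ 4, the graph K_n^+ satisfies σ□_V(K_n^+) = σ□_E(K_n^+) = 1. -/

import Mathlib

open SimpleGraph

/-- An `l`-track on `G`: a surjective function whose consecutive values are adjacent. -/
def IsTrack {V : Type*} (G : SimpleGraph V) {l : ℕ} (f : Fin l → V) : Prop :=
  Function.Surjective f ∧
    ∀ i : ℕ, ∀ hi : i + 1 < l, G.Adj (f ⟨i, Nat.lt_of_succ_lt hi⟩) (f ⟨i + 1, hi⟩)

/-- A lazy `l`-track on `G`: consecutive values are adjacent or equal. -/
def IsLazyTrack {V : Type*} (G : SimpleGraph V) {l : ℕ} (f : Fin l → V) : Prop :=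
  Function.Surjective f ∧
    ∀ i : ℕ, ∀ hi : i + 1 < l,
      G.Adj (f ⟨i, Nat.lt_of_succ_lt hi⟩) (f ⟨i + 1, hi⟩) ∨
        f ⟨i, Nat.lt_of_succ_lt hi⟩ = f ⟨i + 1, hi⟩

/-- The condition that every edge of `G` is traversed by `f`. -/
def SweepCond {V : Type*} (G : SimpleGraph V) {l : ℕ} (f : Fin l → V) : Prop :=
  ∀ e ∈ G.edgeSet, ∃ i : ℕ, ∃ hi : i + 1 < l,
    e = s(f ⟨i, Nat.lt_of_succ_lt hi⟩, f ⟨i + 1, hi⟩)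

/-- An `l`-sweep on `G`: an `l`-track traversing every edge. -/
def IsSweep {V : Type*} (G : SimpleGraph V) {l : ℕ} (f : Fin l → V) : Prop :=
  IsTrack G f ∧ SweepCond G f

/-- A lazy `l`-sweep on `G`: a lazy `l`-track traversing every edge. -/
def IsLazySweep {V : Type*} (G : SimpleGraph V) {l : ℕ} (f : Fin l → V) : Prop :=
  IsLazyTrack G f ∧ SweepCond G f

/-- `f` and `g` are opposite: at each step exactly `f` moves iff `g` stays. -/
def IsOpposite {V : Type*} (G : SimpleGraph V) {l : ℕ} (f g : Fin l → V) : Prop :=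
  ∀ i : ℕ, ∀ hi : i + 1 < l,
    (G.Adj (f ⟨i, Nat.lt_of_succ_lt hi⟩) (f ⟨i + 1, hi⟩) ↔
      g ⟨i, Nat.lt_of_succ_lt hi⟩ = g ⟨i + 1, hi⟩)

/-- The distance `m_G(f,g)`: minimal distance between simultaneous positions. -/
noncomputable def mDist {V : Type*} (G : SimpleGraph V) {l : ℕ} (f g : Fin l → V) : ℕ :=
  sInf {d | ∃ i : Fin l, G.dist (f i) (g i) = d}

/-- Strong vertex span `σ⊠_V(G)`. -/
noncomputable def strongVertexSpan {V : Type*} (G : SimpleGraph V) : ℕ :=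
  sSup {d | ∃ (l : ℕ) (f g : Fin l → V), IsLazyTrack G f ∧ IsLazyTrack G g ∧ mDist G f g = d}

/-- Direct vertex span `σ×_V(G)`. -/
noncomputable def directVertexSpan {V : Type*} (G : SimpleGraph V) : ℕ :=
  sSup {d | ∃ (l : ℕ) (f g : Fin l → V), IsTrack G f ∧ IsTrack G g ∧ mDist G f g = d}

/-- Cartesian vertex span `σ□_V(G)`. -/
noncomputable def cartesianVertexSpan {V : Type*} (G : SimpleGraph V) : ℕ :=
  sSup {d | ∃ (l : ℕ) (f g : Fin l → V),
    IsLazyTrack G f ∧ IsLazyTrack G g ∧ IsOpposite G f g ∧ mDist G f g = d}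

/-- Strong edge span `σ⊠_E(G)`. -/
noncomputable def strongEdgeSpan {V : Type*} (G : SimpleGraph V) : ℕ :=
  sSup {d | ∃ (l : ℕ) (f g : Fin l → V), IsLazySweep G f ∧ IsLazySweep G g ∧ mDist G f g = d}

/-- Direct edge span `σ×_E(G)`. -/
noncomputable def directEdgeSpan {V : Type*} (G : SimpleGraph V) : ℕ :=
  sSup {d | ∃ (l : ℕ) (f g : Fin l → V), IsSweep G f ∧ IsSweep G g ∧ mDist G f g = d}

/-- Cartesian edge span `σ□_E(G)`. -/
noncomputable def cartesianEdgeSpan {V : Type*} (G : SimpleGraph V) : ℕ :=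
  sSup {d | ∃ (l : ℕ) (f g : Fin l → V),
    IsLazySweep G f ∧ IsLazySweep G g ∧ IsOpposite G f g ∧ mDist G f g = d}

/-- `L⊠_V(G)`: minimal length of lazy tracks realizing the strong vertex span. -/
noncomputable def strongVertexL {V : Type*} (G : SimpleGraph V) : ℕ :=
  sInf {l | ∃ f g : Fin l → V,
    IsLazyTrack G f ∧ IsLazyTrack G g ∧ mDist G f g = strongVertexSpan G}

/-- `L×_V(G)`. -/
noncomputable def directVertexL {V : Type*} (G : SimpleGraph V) : ℕ :=
  sInf {l | ∃ f g : Fin l → V,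
    IsTrack G f ∧ IsTrack G g ∧ mDist G f g = directVertexSpan G}

/-- `L□_V(G)`. -/
noncomputable def cartesianVertexL {V : Type*} (G : SimpleGraph V) : ℕ :=
  sInf {l | ∃ f g : Fin l → V,
    IsLazyTrack G f ∧ IsLazyTrack G g ∧ IsOpposite G f g ∧ mDist G f g = cartesianVertexSpan G}

/-- `L⊠_E(G)`. -/
noncomputable def strongEdgeL {V : Type*} (G : SimpleGraph V) : ℕ :=
  sInf {l | ∃ f g : Fin l → V,
    IsLazySweep G f ∧ IsLazySweep G g ∧ mDist G f g = strongEdgeSpan G}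

/-- `L×_E(G)`. -/
noncomputable def directEdgeL {V : Type*} (G : SimpleGraph V) : ℕ :=
  sInf {l | ∃ f g : Fin l → V,
    IsSweep G f ∧ IsSweep G g ∧ mDist G f g = directEdgeSpan G}

/-- `L□_E(G)`. -/
noncomputable def cartesianEdgeL {V : Type*} (G : SimpleGraph V) : ℕ :=
  sInf {l | ∃ f g : Fin l → V,
    IsLazySweep G f ∧ IsLazySweep G g ∧ IsOpposite G f g ∧ mDist G f g = cartesianEdgeSpan G}

/-- `K_n^+`: the complete graph `K_n` (on `Fin n`, with `v_1 = 0` and `v_n = n-1`)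
with the edge `v_1 v_n` subdivided through the new vertex `w = Sum.inr ()`. -/
def KnPlus (n : ℕ) : SimpleGraph (Fin n ⊕ Unit) :=
  SimpleGraph.fromRel (fun a b =>
    match a, b with
    | Sum.inl i, Sum.inl j =>
        ¬((i.val = 0 ∧ j.val = n - 1) ∨ (i.val = n - 1 ∧ j.val = 0))
    | Sum.inl i, Sum.inr _ => i.val = 0 ∨ i.val = n - 1
    | Sum.inr _, _ => False)



-- auxiliary lemmas
lemma adj_ll {n : ℕ} {i j : Fin n} : (KnPlus n).Adj (Sum.inl i) (Sum.inl j) ↔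
    i ≠ j ∧ ¬(i.val = 0 ∧ j.val = n-1) ∧ ¬(i.val = n-1 ∧ j.val = 0) := by
  simp only [KnPlus, SimpleGraph.fromRel_adj, ne_eq, Sum.inl.injEq]
  tauto

lemma adj_lr {n : ℕ} {i : Fin n} {u : Unit} : (KnPlus n).Adj (Sum.inl i) (Sum.inr u) ↔
    i.val = 0 ∨ i.val = n-1 := by
  simp only [KnPlus, SimpleGraph.fromRel_adj, ne_eq]
  simp

lemma adj_rl {n : ℕ} {i : Fin n} {u : Unit} : (KnPlus n).Adj (Sum.inr u) (Sum.inl i) ↔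
    i.val = 0 ∨ i.val = n-1 := by
  rw [(KnPlus n).adj_comm]; exact adj_lr

lemma adj_rr {n : ℕ} {u v : Unit} : ¬ (KnPlus n).Adj (Sum.inr u) (Sum.inr v) := by
  simp [KnPlus, SimpleGraph.fromRel_adj]
section Generic
variable {α : Type*} {R : α → α → Prop}

lemma infixL {x l₁ : List α} (l₂ : List α) (h : x <:+: l₁) : x <:+: l₁ ++ l₂ :=
  h.trans ⟨[], l₂, by simp⟩

lemma infixR {x : List α} (l₁ : List α) {l₂ : List α} (h : x <:+: l₂) : x <:+: l₁ ++ l₂ :=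
  h.trans ⟨l₁, [], by simp⟩

lemma infix_cons' {x : List α} (a : α) {l : List α} (h : x <:+: l) : x <:+: a :: l :=
  h.trans ⟨[a], [], by simp⟩

lemma chain'_hub (h : α) (blocks : List (List α))
    (hb : ∀ b ∈ blocks, List.Chain' R (h :: b) ∧ b.getLast? = some h) :
    List.Chain' R (h :: blocks.flatten) ∧ (h :: blocks.flatten).getLast? = some h := by
  induction blocks with
  | nil => exact ⟨List.isChain_singleton h, rfl⟩
  | cons b bs ih =>
    obtain ⟨hc, hlast⟩ := hb b List.mem_cons_self
    obtain ⟨ihc, ihlast⟩ := ih (fun b' hb' => hb b' (List.mem_cons_of_mem _ hb'))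
    have hflat : (b :: bs).flatten = b ++ bs.flatten := rfl
    constructor
    · rw [hflat, show h :: (b ++ bs.flatten) = (h :: b) ++ bs.flatten from rfl]
      refine List.IsChain.append hc (List.IsChain.tail ihc) ?_
      intro x hx y hy
      have hx' : x = h := by
        have hgl : (h :: b).getLast? = some h := by
          cases b with
          | nil => simp at hlast
          | cons c t => rw [List.getLast?_cons_cons]; exact hlast
        rw [hgl] at hx
        exact (by simpa using hx : h = x).symm
      subst hx'
      exact (List.isChain_cons.mp ihc).1 y hy
    · rw [hflat]
      cases hbs : bs.flatten with
      | nil =>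
        rw [show h :: (b ++ []) = h :: b from by simp]
        cases b with
        | nil => simp at hlast
        | cons c t => rw [List.getLast?_cons_cons]; exact hlast
      | cons z zs =>
        rw [show h :: (b ++ z :: zs) = (h :: b) ++ (z :: zs) from rfl]
        rw [List.getLast?_append_of_ne_nil _ (by simp)]
        rw [hbs, List.getLast?_cons_cons] at ihlast
        exact ihlast

lemma infix_get {p q : α} {L : List α} (h : [p, q] <:+: L) :
    ∃ i : ℕ, ∃ hi : i + 1 < L.length,
      L.get ⟨i, Nat.lt_of_succ_lt hi⟩ = p ∧ L.get ⟨i+1, hi⟩ = q := by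
  obtain ⟨s, t, rfl⟩ := h
  rw [List.append_assoc]
  refine ⟨s.length, by simp, ?_, ?_⟩
  · show (s ++ ([p, q] ++ t))[s.length]'_ = p
    rw [List.getElem_append_right (le_refl s.length)]
    simp
  · show (s ++ ([p, q] ++ t))[s.length + 1]'_ = q
    rw [List.getElem_append_right (by omega : s.length ≤ s.length + 1)]
    simp

end Generic

lemma adj_vals {n : ℕ} {i j : Fin n} (h1 : i.val ≠ j.val) (h2 : ¬(i.val = 0 ∧ j.val = n-1))
    (h3 : ¬(i.val = n-1 ∧ j.val = 0)) : (KnPlus n).Adj (Sum.inl i) (Sum.inl j) :=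
  adj_ll.mpr ⟨fun he => h1 (by rw [he]), h2, h3⟩

namespace KPC

variable (n : ℕ) (hn : 4 ≤ n)

def A0 : Fin n ⊕ Unit := Sum.inl ⟨0, by omega⟩
def A1 : Fin n ⊕ Unit := Sum.inl ⟨1, by omega⟩
def A2 : Fin n ⊕ Unit := Sum.inl ⟨2, by omega⟩
def AN : Fin n ⊕ Unit := Sum.inl ⟨n-1, by omega⟩
def W : Fin n ⊕ Unit := Sum.inr ()
def vl {n : ℕ} (k : Fin n) : Fin n ⊕ Unit := Sum.inl k

def P1 (q : Fin n × Fin n) : Prop :=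
  q.1.val ≠ q.2.val ∧ q.1.val ≠ 1 ∧ q.2.val ≠ 1 ∧
    ¬(q.1.val = 0 ∧ q.2.val = n-1) ∧ ¬(q.1.val = n-1 ∧ q.2.val = 0)

def P2 (q : Fin n × Fin n) : Prop :=
  q.1.val ≠ q.2.val ∧ q.1.val ≠ 1 ∧ q.2.val ≠ 1 ∧ q.1.val ≠ 2 ∧ q.2.val ≠ 2 ∧
    ¬(q.1.val = 0 ∧ q.2.val = n-1) ∧ ¬(q.1.val = n-1 ∧ q.2.val = 0)

instance : DecidablePred (P1 n) := fun q => by unfold P1; infer_instance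
instance : DecidablePred (P2 n) := fun q => by unfold P2; infer_instance

def pairs1 : List (Fin n × Fin n) :=
  ((List.finRange n) ×ˢ (List.finRange n)).filter (fun q => decide (P1 n q))

def pairs2 : List (Fin n × Fin n) :=
  ((List.finRange n) ×ˢ (List.finRange n)).filter (fun q => decide (P2 n q))

def cs : List (Fin n) := (List.finRange n).filter (fun c => decide (c.val ≠ 1 ∧ c.val ≠ 2))

lemma mem_pairs1 {q : Fin n × Fin n} : q ∈ pairs1 n ↔ P1 n q := by
  constructor
  · intro h
    have := (List.mem_filter.mp h).2
    simpa using this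
  · intro h
    exact List.mem_filter.mpr ⟨List.pair_mem_product.mpr ⟨List.mem_finRange _, List.mem_finRange _⟩,
      by simpa using h⟩

lemma mem_pairs2 {q : Fin n × Fin n} : q ∈ pairs2 n ↔ P2 n q := by
  constructor
  · intro h
    have := (List.mem_filter.mp h).2
    simpa using this
  · intro h
    exact List.mem_filter.mpr ⟨List.pair_mem_product.mpr ⟨List.mem_finRange _, List.mem_finRange _⟩,
      by simpa using h⟩

lemma mem_cs {c : Fin n} : c ∈ cs n ↔ (c.val ≠ 1 ∧ c.val ≠ 2) := by
  constructor
  · intro h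
    have := (List.mem_filter.mp h).2
    simpa using this
  · intro h
    exact List.mem_filter.mpr ⟨List.mem_finRange _, by simpa using h⟩

abbrev PV (n : ℕ) := (Fin n ⊕ Unit) × (Fin n ⊕ Unit)

def Rstep (p q : PV n) : Prop :=
  ((KnPlus n).Adj p.1 q.1 ∧ p.2 = q.2) ∨ (p.1 = q.1 ∧ (KnPlus n).Adj p.2 q.2)

def blk1 (q : Fin n × Fin n) : List (PV n) := [(vl q.1, W n), (vl q.2, W n), (A1 n hn, W n)]
def blocks1 : List (List (PV n)) := (pairs1 n).map (blk1 n hn)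
def phase1 : List (PV n) := (A1 n hn, W n) :: (blocks1 n hn).flatten

def blk2 (q : Fin n × Fin n) : List (PV n) :=
  [(A1 n hn, vl q.1), (A1 n hn, vl q.2), (A1 n hn, A2 n hn)]
def blkw : List (PV n) :=
  [(A1 n hn, A0 n hn), (A1 n hn, W n), (A1 n hn, AN n hn), (A1 n hn, A2 n hn)]
def blocks2 : List (List (PV n)) := (pairs2 n).map (blk2 n hn) ++ [blkw n hn]
def phase2 : List (PV n) := (A1 n hn, A0 n hn) :: (A1 n hn, A2 n hn) :: (blocks2 n hn).flatten

def phase3 : List (PV n) := [(A0 n hn, A2 n hn), (W n, A2 n hn), (AN n hn, A2 n hn)]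

def blk4 (c : Fin n) : List (PV n) := [(W n, vl c), (W n, A1 n hn)]
def blocks4 : List (List (PV n)) := (cs n).map (blk4 n hn)
def phase4 : List (PV n) := (W n, A2 n hn) :: (W n, A1 n hn) :: (blocks4 n hn).flatten

def LL : List (PV n) := phase1 n hn ++ phase2 n hn ++ phase3 n hn ++ phase4 n hn

-- chain lemmas
lemma chain_phase1 : List.Chain' (Rstep n) (phase1 n hn) ∧
    (phase1 n hn).getLast? = some (A1 n hn, W n) := by
  apply chain'_hub
  intro b hb
  simp only [blocks1, List.mem_map] at hb
  obtain ⟨q, hq, rfl⟩ := hb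
  obtain ⟨h1, h2, h3, h4, h5⟩ := (mem_pairs1 n).mp hq
  refine ⟨?_, rfl⟩
  refine List.isChain_cons_cons.mpr ⟨?_, List.isChain_cons_cons.mpr ⟨?_, List.isChain_cons_cons.mpr
    ⟨?_, List.isChain_singleton _⟩⟩⟩
  · exact Or.inl ⟨adj_vals (by simpa [A1] using h2.symm) (by simp [A1]; try omega) (by simp [A1]; try omega), rfl⟩
  · exact Or.inl ⟨adj_vals h1 h4 h5, rfl⟩
  · exact Or.inl ⟨adj_vals (by simpa [A1] using h3) (by simp [A1]; try omega) (by simp [A1]; try omega), rfl⟩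

lemma chain_phase2 : List.Chain' (Rstep n) (phase2 n hn) ∧
    (phase2 n hn).getLast? = some (A1 n hn, A2 n hn) := by
  have hub := chain'_hub (R := Rstep n) (A1 n hn, A2 n hn) (blocks2 n hn) ?_
  · constructor
    · refine List.isChain_cons_cons.mpr ⟨?_, hub.1⟩
      exact Or.inr ⟨rfl, adj_vals (by simp [A0, A2]) (by simp [A0, A2]; try omega) (by simp [A0, A2]; try omega)⟩
    · show ((A1 n hn, A0 n hn) :: (A1 n hn, A2 n hn) :: (blocks2 n hn).flatten).getLast? = _
      rw [List.getLast?_cons_cons]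
      exact hub.2
  · intro b hb
    simp only [blocks2, List.mem_append, List.mem_map, List.mem_singleton, List.not_mem_nil, or_false] at hb
    rcases hb with ⟨q, hq, rfl⟩ | rfl
    · obtain ⟨h1, h2, h3, h4, h5, h6, h7⟩ := (mem_pairs2 n).mp hq
      refine ⟨?_, rfl⟩
      refine List.isChain_cons_cons.mpr ⟨?_, List.isChain_cons_cons.mpr ⟨?_, List.isChain_cons_cons.mpr
        ⟨?_, List.isChain_singleton _⟩⟩⟩
      · exact Or.inr ⟨rfl, adj_vals (by simpa [A2] using h4.symm) (by simp [A2]; try omega) (by simp [A2]; try omega)⟩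
      · exact Or.inr ⟨rfl, adj_vals h1 h6 h7⟩
      · exact Or.inr ⟨rfl, adj_vals (by simpa [A2] using h5) (by simp [A2]; try omega) (by simp [A2]; try omega)⟩
    · refine ⟨?_, rfl⟩
      refine List.isChain_cons_cons.mpr ⟨?_, List.isChain_cons_cons.mpr ⟨?_, List.isChain_cons_cons.mpr
        ⟨?_, List.isChain_cons_cons.mpr ⟨?_, List.isChain_singleton _⟩⟩⟩⟩
      · exact Or.inr ⟨rfl, adj_vals (by simp [A0, A2]; try omega) (by simp [A0, A2]; try omega) (by simp [A0, A2]; try omega)⟩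
      · exact Or.inr ⟨rfl, by rw [show W n = Sum.inr () from rfl, A0]; exact adj_lr.mpr (Or.inl rfl)⟩
      · exact Or.inr ⟨rfl, by rw [show W n = Sum.inr () from rfl, AN]; exact adj_rl.mpr (Or.inr rfl)⟩
      · exact Or.inr ⟨rfl, adj_vals (by simp [AN, A2]; try omega) (by simp [AN, A2]; try omega) (by simp [AN, A2]; try omega)⟩

lemma chain_phase3 : List.Chain' (Rstep n) (phase3 n hn) ∧
    (phase3 n hn).getLast? = some (AN n hn, A2 n hn) := by
  refine ⟨List.isChain_cons_cons.mpr ⟨?_, List.isChain_cons_cons.mpr ⟨?_, List.isChain_singleton _⟩⟩, rfl⟩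
  · exact Or.inl ⟨by rw [show W n = Sum.inr () from rfl, A0]; exact adj_lr.mpr (Or.inl rfl), rfl⟩
  · exact Or.inl ⟨by rw [show W n = Sum.inr () from rfl, AN]; exact adj_rl.mpr (Or.inr rfl), rfl⟩

lemma chain_phase4 : List.Chain' (Rstep n) (phase4 n hn) := by
  have hub := chain'_hub (R := Rstep n) (W n, A1 n hn) (blocks4 n hn) ?_
  · refine List.isChain_cons_cons.mpr ⟨?_, hub.1⟩
    exact Or.inr ⟨rfl, adj_vals (by simp [A1, A2]) (by simp [A1, A2]; try omega) (by simp [A1, A2]; try omega)⟩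
  · intro b hb
    simp only [blocks4, List.mem_map] at hb
    obtain ⟨c, hc, rfl⟩ := hb
    obtain ⟨h1, h2⟩ := (mem_cs n).mp hc
    refine ⟨?_, rfl⟩
    refine List.isChain_cons_cons.mpr ⟨?_, List.isChain_cons_cons.mpr ⟨?_, List.isChain_singleton _⟩⟩
    · exact Or.inr ⟨rfl, adj_vals (by simpa [A1] using fun he => h1 he.symm) (by simp [A1]; try omega) (by simp [A1]; try omega)⟩
    · exact Or.inr ⟨rfl, adj_vals (by simpa [A1] using h1) (by simp [A1]; try omega) (by simp [A1]; try omega)⟩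

lemma chain_LL : List.Chain' (Rstep n) (LL n hn) := by
  have c1 := chain_phase1 n hn
  have c2 := chain_phase2 n hn
  have c3 := chain_phase3 n hn
  have c4 := chain_phase4 n hn
  refine List.IsChain.append (List.IsChain.append (List.IsChain.append c1.1 c2.1 ?_) c3.1 ?_) c4 ?_
  · intro x hx y hy
    rw [c1.2] at hx
    simp only [Option.mem_some_iff] at hx
    subst hx
    simp only [phase2, List.head?_cons, Option.mem_some_iff] at hy
    subst hy
    exact Or.inr ⟨rfl, by rw [show W n = Sum.inr () from rfl, A0]; exact adj_rl.mpr (Or.inl rfl)⟩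
  · intro x hx y hy
    rw [List.getLast?_append_of_ne_nil _ (by simp [phase2]), c2.2] at hx
    simp only [Option.mem_some_iff] at hx
    subst hx
    simp only [phase3, List.head?_cons, Option.mem_some_iff] at hy
    subst hy
    exact Or.inl ⟨adj_vals (by simp [A0, A1]) (by simp [A0, A1]; try omega) (by simp [A0, A1]; try omega), rfl⟩
  · intro x hx y hy
    rw [List.getLast?_append_of_ne_nil _ (by simp [phase3]), c3.2] at hx
    simp only [Option.mem_some_iff] at hx
    subst hx
    simp only [phase4, List.head?_cons, Option.mem_some_iff] at hy
    subst hy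
    exact Or.inl ⟨by rw [show W n = Sum.inr () from rfl, AN]; exact adj_lr.mpr (Or.inr rfl), rfl⟩

lemma ne_inl_inr {n : ℕ} {i : Fin n} {u : Unit} : (Sum.inl i : Fin n ⊕ Unit) ≠ Sum.inr u := by simp

lemma ne_inl_vals {n : ℕ} {i j : Fin n} (h : i.val ≠ j.val) :
    (Sum.inl i : Fin n ⊕ Unit) ≠ Sum.inl j := by
  simp only [ne_eq, Sum.inl.injEq]
  exact fun he => h (by rw [he])

lemma distinct : ∀ p ∈ LL n hn, p.1 ≠ p.2 := by
  intro p hp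
  simp only [LL, List.mem_append] at hp
  rcases hp with ((hp | hp) | hp) | hp
  · simp only [phase1, List.mem_cons, List.mem_flatten, blocks1, List.mem_map, List.mem_singleton, List.not_mem_nil, or_false] at hp
    rcases hp with rfl | ⟨b, ⟨q, hq, rfl⟩, hpb⟩
    · exact ne_inl_inr
    · simp only [blk1, List.mem_cons, List.mem_singleton, List.not_mem_nil, or_false] at hpb
      rcases hpb with rfl | rfl | rfl <;> exact ne_inl_inr
  · simp only [phase2, List.mem_cons, List.mem_flatten, blocks2, List.mem_append,
      List.mem_map, List.mem_singleton, List.not_mem_nil, or_false] at hp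
    rcases hp with rfl | rfl | ⟨b, ⟨q, hq, rfl⟩ | rfl, hpb⟩
    · exact ne_inl_vals (by simp [A1, A0])
    · exact ne_inl_vals (by simp [A1, A2])
    · obtain ⟨h1, h2, h3, h4, h5, h6, h7⟩ := (mem_pairs2 n).mp hq
      simp only [blk2, List.mem_cons, List.mem_singleton, List.not_mem_nil, or_false] at hpb
      rcases hpb with rfl | rfl | rfl
      · exact ne_inl_vals (by simpa [A1, vl] using fun he => h2 he.symm)
      · exact ne_inl_vals (by simpa [A1, vl] using fun he => h3 he.symm)
      · exact ne_inl_vals (by simp [A1, A2])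
    · simp only [blkw, List.mem_cons, List.mem_singleton, List.not_mem_nil, or_false] at hpb
      rcases hpb with rfl | rfl | rfl | rfl
      · exact ne_inl_vals (by simp [A1, A0])
      · exact ne_inl_inr
      · exact ne_inl_vals (by simp [A1, AN]; omega)
      · exact ne_inl_vals (by simp [A1, A2])
  · simp only [phase3, List.mem_cons, List.mem_singleton, List.not_mem_nil, or_false] at hp
    rcases hp with rfl | rfl | rfl
    · exact ne_inl_vals (by simp [A0, A2])
    · exact fun h => ne_inl_inr (n := n) h.symm
    · exact ne_inl_vals (by simp [AN, A2]; omega)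
  · simp only [phase4, List.mem_cons, List.mem_flatten, blocks4, List.mem_map] at hp
    rcases hp with rfl | rfl | ⟨b, ⟨c, hc, rfl⟩, hpb⟩
    · exact fun h => ne_inl_inr (n := n) h.symm
    · exact fun h => ne_inl_inr (n := n) h.symm
    · simp only [blk4, List.mem_cons, List.mem_singleton, List.not_mem_nil, or_false] at hpb
      rcases hpb with rfl | rfl <;> exact fun h => ne_inl_inr (n := n) h.symm

lemma mem_A0A2 : (A0 n hn, A2 n hn) ∈ LL n hn := by
  simp only [LL, List.mem_append]
  left; right
  simp [phase3]

lemma LL_ne_nil : LL n hn ≠ [] := by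
  simp [LL, phase1]

lemma infix_phase1 {x : List (PV n)} (h : x <:+: phase1 n hn) : x <:+: LL n hn :=
  infixL _ (infixL _ (infixL _ h))
lemma infix_phase2 {x : List (PV n)} (h : x <:+: phase2 n hn) : x <:+: LL n hn :=
  infixL _ (infixL _ (infixR _ h))
lemma infix_phase3 {x : List (PV n)} (h : x <:+: phase3 n hn) : x <:+: LL n hn :=
  infixL _ (infixR _ h)
lemma infix_phase4 {x : List (PV n)} (h : x <:+: phase4 n hn) : x <:+: LL n hn :=
  infixR _ h

lemma infix_blk1 {x : List (PV n)} {q : Fin n × Fin n} (hq : q ∈ pairs1 n)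
    (h : x <:+: blk1 n hn q) : x <:+: phase1 n hn :=
  infix_cons' _ (h.trans (List.infix_of_mem_flatten (List.mem_map_of_mem (f := blk1 n hn) hq)))

lemma infix_blk2 {x : List (PV n)} {q : Fin n × Fin n} (hq : q ∈ pairs2 n)
    (h : x <:+: blk2 n hn q) : x <:+: phase2 n hn :=
  infix_cons' _ (infix_cons' _ (h.trans (List.infix_of_mem_flatten
    (by simp only [blocks2, List.mem_append, List.mem_map]
        exact Or.inl ⟨q, hq, rfl⟩))))

lemma infix_blkw {x : List (PV n)} (h : x <:+: blkw n hn) : x <:+: phase2 n hn :=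
  infix_cons' _ (infix_cons' _ (h.trans (List.infix_of_mem_flatten
    (by simp [blocks2]))))

lemma infix_blk4 {x : List (PV n)} {c : Fin n} (hc : c ∈ cs n)
    (h : x <:+: blk4 n hn c) : x <:+: phase4 n hn :=
  infix_cons' _ (infix_cons' _ (h.trans (List.infix_of_mem_flatten (List.mem_map_of_mem (f := blk4 n hn) hc))))

include hn in
lemma exists_partner1 {j : Fin n} (hj1 : j.val ≠ 1) : ∃ d : Fin n, (d, j) ∈ pairs1 n := by
  by_cases hj : j.val = 0 ∨ j.val = n - 1
  · refine ⟨⟨2, by omega⟩, (mem_pairs1 n).mpr ⟨?_, ?_, ?_, ?_, ?_⟩⟩ <;> simp <;> omega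
  · refine ⟨⟨0, by omega⟩, (mem_pairs1 n).mpr ⟨?_, ?_, ?_, ?_, ?_⟩⟩ <;> simp <;> omega

lemma cover_f (x y : Fin n ⊕ Unit) (hadj : (KnPlus n).Adj x y) :
    ∃ p q : PV n, [p, q] <:+: LL n hn ∧ s(x, y) = s(p.1, q.1) := by
  match x, y with
  | Sum.inr u, Sum.inr v => exact absurd hadj adj_rr
  | Sum.inl i, Sum.inl j =>
    obtain ⟨hij, hc1, hc2⟩ := adj_ll.mp hadj
    have hijv : i.val ≠ j.val := fun h => hij (Fin.ext h)
    by_cases hi1 : i.val = 1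
    · have hj1 : j.val ≠ 1 := by omega
      obtain ⟨d, hd⟩ := exists_partner1 n hn hj1
      refine ⟨(vl j, W n), (A1 n hn, W n),
        infix_phase1 n hn (infix_blk1 n hn hd ⟨[(vl d, W n)], [], by simp [blk1]⟩), ?_⟩
      rw [show i = (⟨1, by omega⟩ : Fin n) from Fin.ext hi1]
      exact Sym2.eq_swap
    · by_cases hj1 : j.val = 1
      · obtain ⟨d, hd⟩ := exists_partner1 n hn hi1
        refine ⟨(vl i, W n), (A1 n hn, W n),
          infix_phase1 n hn (infix_blk1 n hn hd ⟨[(vl d, W n)], [], by simp [blk1]⟩), ?_⟩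
        rw [show j = (⟨1, by omega⟩ : Fin n) from Fin.ext hj1]
        rfl
      · have hij' : (i, j) ∈ pairs1 n := (mem_pairs1 n).mpr ⟨hijv, hi1, hj1, hc1, hc2⟩
        exact ⟨(vl i, W n), (vl j, W n),
          infix_phase1 n hn (infix_blk1 n hn hij' ⟨[], [(A1 n hn, W n)], by simp [blk1]⟩), rfl⟩
  | Sum.inl i, Sum.inr u =>
    rcases adj_lr.mp hadj with h0 | hN
    · refine ⟨(A0 n hn, A2 n hn), (W n, A2 n hn),
        infix_phase3 n hn ⟨[], [(AN n hn, A2 n hn)], by simp [phase3]⟩, ?_⟩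
      rw [show i = (⟨0, by omega⟩ : Fin n) from Fin.ext h0]
      rfl
    · refine ⟨(W n, A2 n hn), (AN n hn, A2 n hn),
        infix_phase3 n hn ⟨[(A0 n hn, A2 n hn)], [], by simp [phase3]⟩, ?_⟩
      rw [show i = (⟨n-1, by omega⟩ : Fin n) from Fin.ext hN]
      exact Sym2.eq_swap
  | Sum.inr u, Sum.inl i =>
    rcases adj_rl.mp hadj with h0 | hN
    · refine ⟨(A0 n hn, A2 n hn), (W n, A2 n hn),
        infix_phase3 n hn ⟨[], [(AN n hn, A2 n hn)], by simp [phase3]⟩, ?_⟩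
      rw [show i = (⟨0, by omega⟩ : Fin n) from Fin.ext h0]
      exact Sym2.eq_swap
    · refine ⟨(W n, A2 n hn), (AN n hn, A2 n hn),
        infix_phase3 n hn ⟨[(A0 n hn, A2 n hn)], [], by simp [phase3]⟩, ?_⟩
      rw [show i = (⟨n-1, by omega⟩ : Fin n) from Fin.ext hN]
      rfl

lemma cover_g (x y : Fin n ⊕ Unit) (hadj : (KnPlus n).Adj x y) :
    ∃ p q : PV n, [p, q] <:+: LL n hn ∧ s(x, y) = s(p.2, q.2) := by
  match x, y with
  | Sum.inr u, Sum.inr v => exact absurd hadj adj_rr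
  | Sum.inl i, Sum.inl j =>
    obtain ⟨hij, hc1, hc2⟩ := adj_ll.mp hadj
    have hijv : i.val ≠ j.val := fun h => hij (Fin.ext h)
    by_cases hi1 : i.val = 1
    · have hj1 : j.val ≠ 1 := by omega
      by_cases hj2 : j.val = 2
      · refine ⟨(W n, A2 n hn), (W n, A1 n hn),
          infix_phase4 n hn ⟨[], (blocks4 n hn).flatten, rfl⟩, ?_⟩
        rw [show i = (⟨1, by omega⟩ : Fin n) from Fin.ext hi1,
          show j = (⟨2, by omega⟩ : Fin n) from Fin.ext hj2]
        exact Sym2.eq_swap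
      · have hj : j ∈ cs n := (mem_cs n).mpr ⟨hj1, hj2⟩
        refine ⟨(W n, vl j), (W n, A1 n hn),
          infix_phase4 n hn (infix_blk4 n hn hj (List.infix_refl _)), ?_⟩
        rw [show i = (⟨1, by omega⟩ : Fin n) from Fin.ext hi1]
        exact Sym2.eq_swap
    · by_cases hj1 : j.val = 1
      · by_cases hi2 : i.val = 2
        · refine ⟨(W n, A2 n hn), (W n, A1 n hn),
            infix_phase4 n hn ⟨[], (blocks4 n hn).flatten, rfl⟩, ?_⟩
          rw [show i = (⟨2, by omega⟩ : Fin n) from Fin.ext hi2,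
            show j = (⟨1, by omega⟩ : Fin n) from Fin.ext hj1]
          rfl
        · have hi : i ∈ cs n := (mem_cs n).mpr ⟨hi1, hi2⟩
          refine ⟨(W n, vl i), (W n, A1 n hn),
            infix_phase4 n hn (infix_blk4 n hn hi (List.infix_refl _)), ?_⟩
          rw [show j = (⟨1, by omega⟩ : Fin n) from Fin.ext hj1]
          rfl
      · by_cases hi2 : i.val = 2
        · have hj2 : j.val ≠ 2 := by omega
          rcases eq_or_ne j.val 0 with hj0 | hj0
          · refine ⟨(A1 n hn, A0 n hn), (A1 n hn, A2 n hn),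
              infix_phase2 n hn ⟨[], (blocks2 n hn).flatten, rfl⟩, ?_⟩
            rw [show i = (⟨2, by omega⟩ : Fin n) from Fin.ext hi2,
              show j = (⟨0, by omega⟩ : Fin n) from Fin.ext hj0]
            exact Sym2.eq_swap
          · rcases eq_or_ne j.val (n-1) with hjN | hjN
            · refine ⟨(A1 n hn, AN n hn), (A1 n hn, A2 n hn),
                infix_phase2 n hn (infix_blkw n hn
                  ⟨[(A1 n hn, A0 n hn), (A1 n hn, W n)], [], by simp [blkw]⟩), ?_⟩
              rw [show i = (⟨2, by omega⟩ : Fin n) from Fin.ext hi2,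
                show j = (⟨n-1, by omega⟩ : Fin n) from Fin.ext hjN]
              exact Sym2.eq_swap
            · have hp2 : ((⟨0, by omega⟩ : Fin n), j) ∈ pairs2 n :=
                (mem_pairs2 n).mpr ⟨by simpa using fun h => hj0 h.symm, by simp, hj1, by simp, hj2,
                  by simpa using hjN, by simp; omega⟩
              refine ⟨(A1 n hn, vl j), (A1 n hn, A2 n hn),
                infix_phase2 n hn (infix_blk2 n hn hp2
                  ⟨[(A1 n hn, vl (⟨0, by omega⟩ : Fin n))], [], by simp [blk2]⟩), ?_⟩
              rw [show i = (⟨2, by omega⟩ : Fin n) from Fin.ext hi2]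
              exact Sym2.eq_swap
        · by_cases hj2 : j.val = 2
          · rcases eq_or_ne i.val 0 with hi0 | hi0
            · refine ⟨(A1 n hn, A0 n hn), (A1 n hn, A2 n hn),
                infix_phase2 n hn ⟨[], (blocks2 n hn).flatten, rfl⟩, ?_⟩
              rw [show i = (⟨0, by omega⟩ : Fin n) from Fin.ext hi0,
                show j = (⟨2, by omega⟩ : Fin n) from Fin.ext hj2]
              rfl
            · rcases eq_or_ne i.val (n-1) with hiN | hiN
              · refine ⟨(A1 n hn, AN n hn), (A1 n hn, A2 n hn),
                  infix_phase2 n hn (infix_blkw n hn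
                    ⟨[(A1 n hn, A0 n hn), (A1 n hn, W n)], [], by simp [blkw]⟩), ?_⟩
                rw [show i = (⟨n-1, by omega⟩ : Fin n) from Fin.ext hiN,
                  show j = (⟨2, by omega⟩ : Fin n) from Fin.ext hj2]
                rfl
              · have hp2 : ((⟨0, by omega⟩ : Fin n), i) ∈ pairs2 n :=
                  (mem_pairs2 n).mpr ⟨by simpa using fun h => hi0 h.symm, by simp, hi1, by simp, hi2,
                    by simpa using hiN, by simp; omega⟩
                refine ⟨(A1 n hn, vl i), (A1 n hn, A2 n hn),
                  infix_phase2 n hn (infix_blk2 n hn hp2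
                    ⟨[(A1 n hn, vl (⟨0, by omega⟩ : Fin n))], [], by simp [blk2]⟩), ?_⟩
                rw [show j = (⟨2, by omega⟩ : Fin n) from Fin.ext hj2]
                rfl
          · have hp2 : (i, j) ∈ pairs2 n := (mem_pairs2 n).mpr ⟨hijv, hi1, hj1, hi2, hj2, hc1, hc2⟩
            exact ⟨(A1 n hn, vl i), (A1 n hn, vl j),
              infix_phase2 n hn (infix_blk2 n hn hp2
                ⟨[], [(A1 n hn, A2 n hn)], by simp [blk2]⟩), rfl⟩
  | Sum.inl i, Sum.inr u =>
    rcases adj_lr.mp hadj with h0 | hN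
    · refine ⟨(A1 n hn, A0 n hn), (A1 n hn, W n),
        infix_phase2 n hn (infix_blkw n hn
          ⟨[], [(A1 n hn, AN n hn), (A1 n hn, A2 n hn)], by simp [blkw]⟩), ?_⟩
      rw [show i = (⟨0, by omega⟩ : Fin n) from Fin.ext h0]
      rfl
    · refine ⟨(A1 n hn, W n), (A1 n hn, AN n hn),
        infix_phase2 n hn (infix_blkw n hn
          ⟨[(A1 n hn, A0 n hn)], [(A1 n hn, A2 n hn)], by simp [blkw]⟩), ?_⟩
      rw [show i = (⟨n-1, by omega⟩ : Fin n) from Fin.ext hN]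
      exact Sym2.eq_swap
  | Sum.inr u, Sum.inl i =>
    rcases adj_rl.mp hadj with h0 | hN
    · refine ⟨(A1 n hn, A0 n hn), (A1 n hn, W n),
        infix_phase2 n hn (infix_blkw n hn
          ⟨[], [(A1 n hn, AN n hn), (A1 n hn, A2 n hn)], by simp [blkw]⟩), ?_⟩
      rw [show i = (⟨0, by omega⟩ : Fin n) from Fin.ext h0]
      exact Sym2.eq_swap
    · refine ⟨(A1 n hn, W n), (A1 n hn, AN n hn),
        infix_phase2 n hn (infix_blkw n hn
          ⟨[(A1 n hn, A0 n hn)], [(A1 n hn, A2 n hn)], by simp [blkw]⟩), ?_⟩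
      rw [show i = (⟨n-1, by omega⟩ : Fin n) from Fin.ext hN]
      rfl

end KPC

lemma knplus_connected {n : ℕ} (hn : 4 ≤ n) : (KnPlus n).Connected := by
  rw [connected_iff]
  refine ⟨fun x => ?_, ⟨Sum.inr ()⟩⟩
  · -- reachable to Sum.inr ()
    have key : ∀ y : Fin n ⊕ Unit, (KnPlus n).Reachable y (Sum.inr ()) := by
      intro y
      match y with
      | Sum.inr u => exact Reachable.refl _
      | Sum.inl i =>
        by_cases h : i.val = 0 ∨ i.val = n-1
        · exact (adj_lr.mpr h).reachable
        · push_neg at h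
          refine Reachable.trans (Adj.reachable ?_) (Adj.reachable (u := Sum.inl ⟨0, by omega⟩) ?_)
          · rw [adj_ll]
            refine ⟨by simp [Fin.ext_iff]; omega, by omega, by omega⟩
          · rw [adj_lr]; left; rfl
      -- preconnected: x reachable y via inr
    intro y
    exact (key x).trans (key y).symm

lemma dist_one_of_adj {n : ℕ} {x y : Fin n ⊕ Unit} (h : (KnPlus n).Adj x y) :
    (KnPlus n).dist x y = 1 := SimpleGraph.dist_eq_one_iff_adj.mpr h

/-- if dist from w ≥ 2 then the other vertex is a middle inl -/
lemma far_from_w {n : ℕ} (hn : 4 ≤ n) {y : Fin n ⊕ Unit}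
    (h : 2 ≤ (KnPlus n).dist (Sum.inr ()) y) :
    ∃ k : Fin n, y = Sum.inl k ∧ k.val ≠ 0 ∧ k.val ≠ n-1 := by
  match y with
  | Sum.inr u =>
    rw [show u = () from rfl, SimpleGraph.dist_self] at h; omega
  | Sum.inl k =>
    refine ⟨k, rfl, ?_, ?_⟩ <;> intro hk
    · rw [dist_one_of_adj (adj_rl.mpr (Or.inl hk))] at h; omega
    · rw [dist_one_of_adj (adj_rl.mpr (Or.inr hk))] at h; omega

lemma nat_ivt {q : ℕ → Prop} : ∀ (b a : ℕ), a ≤ b → q a → ¬ q b →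
    ∃ j, a ≤ j ∧ j < b ∧ q j ∧ ¬ q (j+1) := by
  intro b
  induction b with
  | zero =>
    intro a h ha hb
    have : a = 0 := by omega
    subst this
    exact absurd ha hb
  | succ m ih =>
    intro a h ha hb
    have ham : a ≤ m := by
      rcases Nat.lt_or_ge a (m+1) with h'|h'
      · omega
      · exfalso; have : a = m + 1 := by omega
        exact hb (this ▸ ha)
    by_cases hm : q m
    · exact ⟨m, ham, by omega, hm, hb⟩
    · obtain ⟨j, h1, h2, h3, h4⟩ := ih a ham ha hm
      exact ⟨j, h1, by omega, h3, h4⟩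

lemma mdist_le_one {n l : ℕ} (hn : 4 ≤ n) {f g : Fin l → Fin n ⊕ Unit}
    (hf : IsLazyTrack (KnPlus n) f) (hg : IsLazyTrack (KnPlus n) g)
    (hop : IsOpposite (KnPlus n) f g) : mDist (KnPlus n) f g ≤ 1 := by
  suffices h : ∃ i : Fin l, (KnPlus n).dist (f i) (g i) ≤ 1 by
    obtain ⟨i, hi⟩ := h
    exact le_trans (Nat.sInf_le ⟨i, rfl⟩) hi
  by_contra hcon
  push_neg at hcon
  have hbig : ∀ i : Fin l, 2 ≤ (KnPlus n).dist (f i) (g i) := fun i => hcon i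
  obtain ⟨i₀, hi₀⟩ := hf.1 (Sum.inr ())
  obtain ⟨i₁, hi₁⟩ := hf.1 (Sum.inl ⟨0, by omega⟩)
  -- find a transition step j : f ⟨j⟩ and f ⟨j+1⟩, exactly one is inr ()
  have key : ∃ j, ∃ hjl : j + 1 < l,
      (f ⟨j, Nat.lt_of_succ_lt hjl⟩ = Sum.inr () ∧ f ⟨j+1, hjl⟩ ≠ Sum.inr ()) ∨
      (f ⟨j, Nat.lt_of_succ_lt hjl⟩ ≠ Sum.inr () ∧ f ⟨j+1, hjl⟩ = Sum.inr ()) := by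
    rcases le_or_gt i₀.val i₁.val with hord | hord
    · obtain ⟨j, hj1, hj2, hj3, hj4⟩ := nat_ivt (q := fun j => ∀ h : j < l, f ⟨j, h⟩ = Sum.inr ())
        i₁.val i₀.val hord
        (fun h => by rwa [show (⟨i₀.val, h⟩ : Fin l) = i₀ from Fin.ext rfl])
        (fun hq => by
          have := hq i₁.isLt
          rw [show (⟨i₁.val, i₁.isLt⟩ : Fin l) = i₁ from Fin.ext rfl, hi₁] at this
          exact Sum.inl_ne_inr this)
      have hjl : j + 1 < l := Nat.lt_of_le_of_lt hj2 i₁.isLt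
      have hfj1 : f ⟨j+1, hjl⟩ ≠ Sum.inr () := by
        intro hcontra
        exact hj4 (fun _ => hcontra)
      exact ⟨j, hjl, Or.inl ⟨hj3 _, hfj1⟩⟩
    · obtain ⟨j, hj1, hj2, hj3, hj4⟩ := nat_ivt (q := fun j => ∀ h : j < l, f ⟨j, h⟩ ≠ Sum.inr ())
        i₀.val i₁.val (le_of_lt hord)
        (fun h => by
          rw [show (⟨i₁.val, h⟩ : Fin l) = i₁ from Fin.ext rfl, hi₁]
          exact fun hc => Sum.inl_ne_inr hc)
        (fun hq => hq i₀.isLt (by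
          rwa [show (⟨i₀.val, i₀.isLt⟩ : Fin l) = i₀ from Fin.ext rfl]))
      have hjl : j + 1 < l := Nat.lt_of_le_of_lt hj2 i₀.isLt
      refine ⟨j, hjl, Or.inr ⟨hj3 _, ?_⟩⟩
      by_contra hne
      exact hj4 (fun _ => hne)
  obtain ⟨j, hjl, hcase⟩ := key
  -- f moves at step j, so g stays
  have hne : f ⟨j, Nat.lt_of_succ_lt hjl⟩ ≠ f ⟨j+1, hjl⟩ := by
    rcases hcase with ⟨h1, h2⟩ | ⟨h1, h2⟩
    · rw [h1]; exact fun h => h2 h.symm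
    · rw [h2] at *; exact h1
  have hadj : (KnPlus n).Adj (f ⟨j, Nat.lt_of_succ_lt hjl⟩) (f ⟨j+1, hjl⟩) :=
    (hf.2 j hjl).resolve_right hne
  have hgeq : g ⟨j, Nat.lt_of_succ_lt hjl⟩ = g ⟨j+1, hjl⟩ := (hop j hjl).mp hadj
  rcases hcase with ⟨h1, h2⟩ | ⟨h1, h2⟩
  · -- f j = w, f (j+1) = inl m with m = 0 or n-1, g j = g (j+1) = inl k mid
    have hfar := hbig ⟨j, Nat.lt_of_succ_lt hjl⟩
    rw [h1] at hfar
    obtain ⟨k, hk, hk0, hkn⟩ := far_from_w hn hfar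
    rw [h1] at hadj
    match hm : f ⟨j+1, hjl⟩ with
    | Sum.inr u => exact h2 (by rw [hm])
    | Sum.inl m =>
      rw [hm] at hadj
      rw [adj_rl] at hadj
      have hd := hbig ⟨j+1, hjl⟩
      rw [hm, ← hgeq, hk] at hd
      have : (KnPlus n).Adj (Sum.inl m) (Sum.inl k) := by
        rw [adj_ll]
        refine ⟨?_, by omega, by omega⟩
        intro hmk
        rw [hmk] at hadj
        omega
      rw [dist_one_of_adj this] at hd
      omega
  · -- f (j+1) = w, f j = inl m, g j = g(j+1) = inl k mid
    have hfar := hbig ⟨j+1, hjl⟩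
    rw [h2] at hfar
    obtain ⟨k, hk, hk0, hkn⟩ := far_from_w hn hfar
    rw [h2] at hadj
    match hm : f ⟨j, Nat.lt_of_succ_lt hjl⟩ with
    | Sum.inr u => exact h1 (by rw [hm])
    | Sum.inl m =>
      rw [hm] at hadj
      rw [adj_lr] at hadj
      have hd := hbig ⟨j, Nat.lt_of_succ_lt hjl⟩
      rw [hm, hgeq, hk] at hd
      have : (KnPlus n).Adj (Sum.inl m) (Sum.inl k) := by
        rw [adj_ll]
        refine ⟨?_, by omega, by omega⟩
        intro hmk
        rw [hmk] at hadj
        omega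
      rw [dist_one_of_adj this] at hd
      omega


lemma surj_of_sweep {V : Type*} {G : SimpleGraph V} {l : ℕ} {f : Fin l → V}
    (hs : SweepCond G f) (hadj : ∀ v, ∃ u, G.Adj v u) : Function.Surjective f := by
  intro v
  obtain ⟨u, hu⟩ := hadj v
  obtain ⟨i, hi, he⟩ := hs s(v, u) (G.mem_edgeSet.mpr hu)
  rcases Sym2.eq_iff.mp he with ⟨h1, h2⟩ | ⟨h1, h2⟩
  · exact ⟨_, h1.symm⟩
  · exact ⟨_, h1.symm⟩

lemma exists_adj {n : ℕ} (hn : 4 ≤ n) (v : Fin n ⊕ Unit) :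
    ∃ u, (KnPlus n).Adj v u := by
  match v with
  | Sum.inr u => exact ⟨Sum.inl ⟨0, by omega⟩, adj_rl.mpr (Or.inl rfl)⟩
  | Sum.inl i =>
    by_cases h : i.val = 1
    · exact ⟨Sum.inl ⟨2, by omega⟩,
        adj_vals (by simp; try omega) (by simp; try omega) (by simp; try omega)⟩
    · exact ⟨Sum.inl ⟨1, by omega⟩,
        adj_vals (by simp; try omega) (by simp; try omega) (by simp; try omega)⟩

lemma construction {n : ℕ} (hn : 4 ≤ n) :
    ∃ (l : ℕ) (f g : Fin l → Fin n ⊕ Unit),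
      IsLazySweep (KnPlus n) f ∧ IsLazySweep (KnPlus n) g ∧ IsOpposite (KnPlus n) f g ∧
        mDist (KnPlus n) f g = 1 := by
  classical
  set L := KPC.LL n hn with hL
  refine ⟨L.length, fun i => (L.get i).1, fun i => (L.get i).2, ?_⟩
  have hchain : List.Chain' (KPC.Rstep n) L := KPC.chain_LL n hn
  have hstep : ∀ (i : ℕ) (hi : i + 1 < L.length),
      KPC.Rstep n (L.get ⟨i, Nat.lt_of_succ_lt hi⟩) (L.get ⟨i+1, hi⟩) := by
    intro i hi
    exact List.isChain_iff_getElem.mp hchain i (by omega)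
  have hlazyf : ∀ (i : ℕ) (hi : i + 1 < L.length),
      (KnPlus n).Adj ((L.get ⟨i, Nat.lt_of_succ_lt hi⟩).1) ((L.get ⟨i+1, hi⟩).1) ∨
        (L.get ⟨i, Nat.lt_of_succ_lt hi⟩).1 = (L.get ⟨i+1, hi⟩).1 := by
    intro i hi
    rcases hstep i hi with ⟨h, _⟩ | ⟨h, _⟩
    exacts [Or.inl h, Or.inr h]
  have hlazyg : ∀ (i : ℕ) (hi : i + 1 < L.length),
      (KnPlus n).Adj ((L.get ⟨i, Nat.lt_of_succ_lt hi⟩).2) ((L.get ⟨i+1, hi⟩).2) ∨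
        (L.get ⟨i, Nat.lt_of_succ_lt hi⟩).2 = (L.get ⟨i+1, hi⟩).2 := by
    intro i hi
    rcases hstep i hi with ⟨_, h⟩ | ⟨_, h⟩
    exacts [Or.inr h, Or.inl h]
  have hsweepf : SweepCond (KnPlus n) (fun i => (L.get i).1) := by
    intro e he
    induction e using Sym2.ind with
    | _ x y =>
      obtain ⟨p, q, hinf, heq⟩ := KPC.cover_f n hn x y ((KnPlus n).mem_edgeSet.mp he)
      have hinf' : [p, q] <:+: L := hinf
      obtain ⟨i, hi, h1, h2⟩ := infix_get hinf'
      exact ⟨i, hi, by rw [heq, ← h1, ← h2]⟩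
  have hsweepg : SweepCond (KnPlus n) (fun i => (L.get i).2) := by
    intro e he
    induction e using Sym2.ind with
    | _ x y =>
      obtain ⟨p, q, hinf, heq⟩ := KPC.cover_g n hn x y ((KnPlus n).mem_edgeSet.mp he)
      have hinf' : [p, q] <:+: L := hinf
      obtain ⟨i, hi, h1, h2⟩ := infix_get hinf'
      exact ⟨i, hi, by rw [heq, ← h1, ← h2]⟩
  have hsurjf : Function.Surjective (fun i => (L.get i).1) :=
    surj_of_sweep hsweepf (exists_adj hn)
  have hsurjg : Function.Surjective (fun i => (L.get i).2) :=
    surj_of_sweep hsweepg (exists_adj hn)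
  have hopp : IsOpposite (KnPlus n) (fun i => (L.get i).1) (fun i => (L.get i).2) := by
    intro i hi
    rcases hstep i hi with ⟨ha, he⟩ | ⟨he, ha⟩
    · exact ⟨fun _ => he, fun _ => ha⟩
    · constructor
      · intro haf
        exfalso
        have haf' : (KnPlus n).Adj ((L.get ⟨i, Nat.lt_of_succ_lt hi⟩).1)
            ((L.get ⟨i+1, hi⟩).1) := haf
        rw [he] at haf'
        exact (KnPlus n).loopless.irrefl _ haf'
      · intro hge
        exfalso
        have hge' : (L.get ⟨i, Nat.lt_of_succ_lt hi⟩).2 = (L.get ⟨i+1, hi⟩).2 := hge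
        rw [hge'] at ha
        exact (KnPlus n).loopless.irrefl _ ha
  have hconn := knplus_connected hn
  have h1mem : (1 : ℕ) ∈
      {d | ∃ i : Fin L.length, (KnPlus n).dist ((L.get i).1) ((L.get i).2) = d} := by
    have hmA : (KPC.A0 n hn, KPC.A2 n hn) ∈ L := KPC.mem_A0A2 n hn
    obtain ⟨i, hi⟩ := List.mem_iff_get.mp hmA
    refine ⟨i, ?_⟩
    rw [hi]
    exact dist_one_of_adj (adj_vals (by simp) (by simp; try omega) (by simp; try omega))
  have h0mem : (0 : ℕ) ∉
      {d | ∃ i : Fin L.length, (KnPlus n).dist ((L.get i).1) ((L.get i).2) = d} := by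
    rintro ⟨i, hi⟩
    have hmem' : L.get i ∈ L := L.get_mem i
    have hne := KPC.distinct n hn (L.get i) hmem'
    exact hne (hconn.dist_eq_zero_iff.mp hi)
  refine ⟨⟨⟨hsurjf, hlazyf⟩, hsweepf⟩, ⟨⟨hsurjg, hlazyg⟩, hsweepg⟩, hopp, ?_⟩
  show sInf {d | ∃ i : Fin L.length, (KnPlus n).dist ((L.get i).1) ((L.get i).2) = d} = 1
  have hle := Nat.sInf_le h1mem
  have hmem := Nat.sInf_mem (⟨1, h1mem⟩ :
    Set.Nonempty {d | ∃ i : Fin L.length, (KnPlus n).dist ((L.get i).1) ((L.get i).2) = d})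
  have hne0 : sInf {d | ∃ i : Fin L.length,
      (KnPlus n).dist ((L.get i).1) ((L.get i).2) = d} ≠ 0 := by
    intro h
    rw [h] at hmem
    exact h0mem hmem
  omega

theorem stmt8 (n : ℕ) (hn : 4 ≤ n) :
    cartesianVertexSpan (KnPlus n) = 1 ∧ cartesianEdgeSpan (KnPlus n) = 1 := by
  obtain ⟨l, f, g, hf, hg, hopp, hmd⟩ := construction hn
  have hV1 : (1 : ℕ) ∈ {d | ∃ (l : ℕ) (f g : Fin l → (Fin n ⊕ Unit)),
      IsLazyTrack (KnPlus n) f ∧ IsLazyTrack (KnPlus n) g ∧ IsOpposite (KnPlus n) f g ∧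
        mDist (KnPlus n) f g = d} := ⟨l, f, g, hf.1, hg.1, hopp, hmd⟩
  have hE1 : (1 : ℕ) ∈ {d | ∃ (l : ℕ) (f g : Fin l → (Fin n ⊕ Unit)),
      IsLazySweep (KnPlus n) f ∧ IsLazySweep (KnPlus n) g ∧ IsOpposite (KnPlus n) f g ∧
        mDist (KnPlus n) f g = d} := ⟨l, f, g, hf, hg, hopp, hmd⟩
  have hVb : ∀ d ∈ {d | ∃ (l : ℕ) (f g : Fin l → (Fin n ⊕ Unit)),
      IsLazyTrack (KnPlus n) f ∧ IsLazyTrack (KnPlus n) g ∧ IsOpposite (KnPlus n) f g ∧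
        mDist (KnPlus n) f g = d}, d ≤ 1 := by
    rintro d ⟨l', f', g', h1, h2, h3, rfl⟩
    exact mdist_le_one hn h1 h2 h3
  have hEb : ∀ d ∈ {d | ∃ (l : ℕ) (f g : Fin l → (Fin n ⊕ Unit)),
      IsLazySweep (KnPlus n) f ∧ IsLazySweep (KnPlus n) g ∧ IsOpposite (KnPlus n) f g ∧
        mDist (KnPlus n) f g = d}, d ≤ 1 := by
    rintro d ⟨l', f', g', h1, h2, h3, rfl⟩
    exact mdist_le_one hn h1.1 h2.1 h3
  constructor
  · exact le_antisymm (csSup_le ⟨1, hV1⟩ hVb) (le_csSup ⟨1, fun d hd => hVb d hd⟩ hV1)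
  · exact le_antisymm (csSup_le ⟨1, hE1⟩ hEb) (le_csSup ⟨1, fun d hd => hEb d hd⟩ hE1)
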